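/- arXiv:1103.2762 — 3 statements merged into one kernel-verified Lean document; each statement's English description precedes it below -/
import Mathlib

section
/- Let X be a Polish space and φ : X → [0,∞]. With U(φ) the least upper semi-continuous function exceeding φ modulo a meagre set, the following are equivalent: (1) φ ≥ U(φ) outside a meagre set; (2) φ = U(φ) outside a meagre set; (3) there exists an upper semi-continuous ψ with φ = ψ outside a meagre set; (4) φ is Baire measurable. -/
open scoped ENNReal NNReal

def GradedOpen {X : Type*} [TopologicalSpace X] (φ : X → ℝ≥0∞) : Prop :=
  ∀ r : ℝ≥0∞, IsOpen {x : X | φ x < r}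

/-- `φ ≤* ψ`: `φ ≤ ψ` outside a meagre set. -/
def LeAE {X : Type*} [TopologicalSpace X] (φ ψ : X → ℝ≥0∞) : Prop :=
  IsMeagre {x : X | ψ x < φ x}

/-- `φ =* ψ`: `φ = ψ` outside a meagre set. -/
def EqAE {X : Type*} [TopologicalSpace X] (φ ψ : X → ℝ≥0∞) : Prop :=
  IsMeagre {x : X | φ x ≠ ψ x}

/-- `U(φ)`: pointwise infimum of all u.s.c. functions `ψ` with `φ ≤* ψ`. -/
noncomputable def Ugr {X : Type*} [TopologicalSpace X] (φ : X → ℝ≥0∞) : X → ℝ≥0∞ :=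
  fun x => ⨅ ψ : {ψ : X → ℝ≥0∞ // GradedOpen ψ ∧ LeAE φ ψ}, ψ.val x

/-- Baire measurability of `[0,∞]`-valued functions: preimages of Borel sets
have the Baire property. -/
def BaireMeasurableFun {X : Type*} [TopologicalSpace X] (φ : X → ℝ≥0∞) : Prop :=
  ∀ s : Set ℝ≥0∞, MeasurableSet s → BaireMeasurableSet (φ ⁻¹' s)

/-- Countable unions of meagre sets are meagre. -/
lemma isMeagre_iUnion' {X : Type*} [TopologicalSpace X] {ι : Type*} [Countable ι]
    {f : ι → Set X} (h : ∀ i, IsMeagre (f i)) : IsMeagre (⋃ i, f i) := by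
  rw [IsMeagre, Set.compl_iUnion]
  exact countable_iInter_mem.2 h

lemma isMeagre_biUnion' {X : Type*} [TopologicalSpace X] {ι : Type*} {S : Set ι}
    (hS : S.Countable) {f : ι → Set X} (h : ∀ i ∈ S, IsMeagre (f i)) :
    IsMeagre (⋃ i ∈ S, f i) := by
  rw [IsMeagre, Set.compl_iUnion]
  simp only [Set.compl_iUnion]
  exact (countable_bInter_mem hS).2 h

lemma IsMeagre.union' {X : Type*} [TopologicalSpace X] {s t : Set X}
    (hs : IsMeagre s) (ht : IsMeagre t) : IsMeagre (s ∪ t) := by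
  rw [IsMeagre, Set.compl_union]
  exact Filter.inter_mem hs ht

/-- `Ugr φ` is graded open. -/
lemma gradedOpen_Ugr {X : Type*} [TopologicalSpace X] (φ : X → ℝ≥0∞) :
    GradedOpen (Ugr φ) := by
  intro r
  have : {x : X | Ugr φ x < r} =
      ⋃ ψ : {ψ : X → ℝ≥0∞ // GradedOpen ψ ∧ LeAE φ ψ}, {x : X | ψ.val x < r} := by
    ext x
    simp [Ugr, iInf_lt_iff]
  rw [this]
  exact isOpen_iUnion fun ψ => ψ.2.1 r

/-- `φ ≤ Ugr φ` off a meagre set. -/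
lemma leAE_Ugr {X : Type*} [TopologicalSpace X] [SecondCountableTopology X]
    (φ : X → ℝ≥0∞) : IsMeagre {x : X | Ugr φ x < φ x} := by
  classical
  set B := TopologicalSpace.countableBasis X with hB
  have hBbasis := TopologicalSpace.isBasis_countableBasis X
  have key : ∀ q : NNReal,
      IsMeagre ({x : X | Ugr φ x < (q : ℝ≥0∞)} ∩ {x : X | (q : ℝ≥0∞) < φ x}) := by
    intro q
    set T : Set (Set X) :=
      {b ∈ B | ∃ ψ : {ψ : X → ℝ≥0∞ // GradedOpen ψ ∧ LeAE φ ψ},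
        b ⊆ {x : X | ψ.val x < (q : ℝ≥0∞)}} with hT
    have hTc : T.Countable := (TopologicalSpace.countable_countableBasis X).mono
      (Set.sep_subset _ _)
    have hsub : {x : X | Ugr φ x < (q : ℝ≥0∞)} ∩ {x : X | (q : ℝ≥0∞) < φ x} ⊆
        ⋃ b ∈ T, (b ∩ {x : X | (q : ℝ≥0∞) < φ x}) := by
      rintro x ⟨hx1, hx2⟩
      obtain ⟨ψ, hψ⟩ : ∃ ψ : {ψ : X → ℝ≥0∞ // GradedOpen ψ ∧ LeAE φ ψ},
          ψ.val x < (q : ℝ≥0∞) := by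
        simpa [Ugr, iInf_lt_iff] using hx1
      obtain ⟨b, hbB, hxb, hbsub⟩ :=
        hBbasis.exists_subset_of_mem_open hψ (ψ.2.1 (q : ℝ≥0∞))
      exact Set.mem_biUnion ⟨hbB, ψ, hbsub⟩ ⟨hxb, hx2⟩
    refine IsMeagre.mono hsub (isMeagre_biUnion' hTc ?_)
    rintro b ⟨hbB, ψ, hbsub⟩
    refine IsMeagre.mono ?_ ψ.2.2
    rintro x ⟨hxb, hx2⟩
    exact lt_trans (show ψ.val x < ((q : ℝ≥0) : ℝ≥0∞) from hbsub hxb) hx2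
  have hsub : {x : X | Ugr φ x < φ x} ⊆
      ⋃ q : ℚ, ({x : X | Ugr φ x < (Real.toNNReal q : ℝ≥0∞)} ∩
        {x : X | (Real.toNNReal q : ℝ≥0∞) < φ x}) := by
    intro x hx
    obtain ⟨q, _, h1, h2⟩ := ENNReal.lt_iff_exists_rat_btwn.1 hx
    exact Set.mem_iUnion.2 ⟨q, h1, h2⟩
  exact IsMeagre.mono hsub (isMeagre_iUnion' fun q => key _)

/-- The following are equivalent: `φ ≥* U(φ)`; `φ =* U(φ)`; `φ =* ψ` for some
u.s.c. `ψ`; `φ` is Baire measurable. -/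
theorem Ugr_tfae {X : Type*} [TopologicalSpace X] [PolishSpace X] (φ : X → ℝ≥0∞) :
    List.TFAE [LeAE (Ugr φ) φ,
               EqAE φ (Ugr φ),
               ∃ ψ : X → ℝ≥0∞, GradedOpen ψ ∧ EqAE φ ψ,
               BaireMeasurableFun φ] := by
  classical
  tfae_have 1 → 2 := by
    intro h
    refine IsMeagre.mono ?_ ((leAE_Ugr φ).union' h)
    intro x hx
    rcases lt_or_gt_of_ne hx with h1 | h1
    · exact Or.inr h1
    · exact Or.inl h1
  tfae_have 2 → 3 := fun h => ⟨Ugr φ, gradedOpen_Ugr φ, h⟩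
  tfae_have 3 → 1 := by
    rintro ⟨ψ, hψ, heq⟩
    have hle : LeAE φ ψ := IsMeagre.mono (fun x (hx : ψ x < φ x) => ne_of_gt hx) heq
    have hU : ∀ x, Ugr φ x ≤ ψ x := fun x => iInf_le (fun ρ : {ψ : X → ℝ≥0∞ // GradedOpen ψ ∧ LeAE φ ψ} => ρ.val x) ⟨ψ, hψ, hle⟩
    refine IsMeagre.mono ?_ heq
    intro x hx
    exact ne_of_lt (lt_of_lt_of_le hx (hU x))
  tfae_have 3 → 4 := by
    rintro ⟨ψ, hψ, heq⟩ s hs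
    borelize X
    have hmeas : Measurable ψ := measurable_of_Iio fun r => (hψ r).measurableSet
    refine ((hmeas hs).baireMeasurableSet).congr ?_
    have : {x : X | φ x ≠ ψ x}ᶜ ∈ residual X := heq
    filter_upwards [this] with x hx
    simp only [Set.mem_compl_iff, Set.mem_setOf_eq, not_not] at hx
    show (ψ x ∈ s) = (φ x ∈ s)
    rw [hx]
  tfae_have 4 → 3 := by
    intro h
    -- for each rational `q`, pick an open set equal to `{φ < q}` mod meagre
    have hchoice : ∀ q : ℚ, ∃ u : Set X, IsOpen u ∧
        (φ ⁻¹' Set.Iio (Real.toNNReal q : ℝ≥0∞)) =ᶠ[residual X] u := by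
      intro q
      obtain ⟨u, hu, hequ⟩ := (h _ measurableSet_Iio).residualEq_isOpen
      exact ⟨u, hu, hequ⟩
    choose u hu hequ using hchoice
    set ψ : X → ℝ≥0∞ := fun x =>
      ⨅ (q : ℚ) (_ : x ∈ u q), (Real.toNNReal q : ℝ≥0∞) with hψdef
    refine ⟨ψ, ?_, ?_⟩
    · intro r
      have : {x : X | ψ x < r} =
          ⋃ (q : ℚ) (_ : (Real.toNNReal q : ℝ≥0∞) < r), u q := by
        ext x
        simp only [hψdef, Set.mem_setOf_eq, iInf_lt_iff, Set.mem_iUnion]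
        constructor
        · rintro ⟨q, hq, hlt⟩
          exact ⟨q, hlt, hq⟩
        · rintro ⟨q, hlt, hq⟩
          exact ⟨q, hq, hlt⟩
      rw [this]
      exact isOpen_iUnion fun q => isOpen_iUnion fun _ => hu q
    · -- φ = ψ off meagre set
      have hres : {x : X | ∀ q : ℚ,
          (x ∈ φ ⁻¹' Set.Iio (Real.toNNReal q : ℝ≥0∞) ↔ x ∈ u q)} ∈
            residual X := by
        have h2 : (⋂ q : ℚ, {x : X |
            x ∈ φ ⁻¹' Set.Iio (Real.toNNReal q : ℝ≥0∞) ↔ x ∈ u q}) ∈ residual X := by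
          refine countable_iInter_mem.2 fun q => ?_
          filter_upwards [hequ q] with x hx
          exact Iff.of_eq hx
        refine Filter.mem_of_superset h2 ?_
        intro x hx
        simp only [Set.mem_iInter, Set.mem_setOf_eq] at hx ⊢
        exact hx
      rw [EqAE, IsMeagre]
      filter_upwards [hres] with x hx
      simp only [Set.mem_compl_iff, Set.mem_setOf_eq, not_not]
      have hiff : ∀ q : ℚ, x ∈ u q ↔ φ x < (Real.toNNReal q : ℝ≥0∞) := by
        intro q
        exact ((hx q).symm).trans (by simp [Set.mem_preimage])
      refine le_antisymm ?_ ?_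
      · -- φ x ≤ ψ x
        refine le_iInf fun q => le_iInf fun hq => ?_
        exact le_of_lt ((hiff q).1 hq)
      · -- ψ x ≤ φ x
        by_contra hc
        push_neg at hc
        obtain ⟨q, _, h1, h2⟩ := ENNReal.lt_iff_exists_rat_btwn.1 hc
        have hxu : x ∈ u q := (hiff q).2 h1
        have : ψ x ≤ (Real.toNNReal q : ℝ≥0∞) := by
          exact iInf_le_of_le q (iInf_le_of_le hxu le_rfl)
        exact absurd (lt_of_le_of_lt this h2) (lt_irrefl _)
  tfae_finish
end

section
/- Let G be a Polish group and φ : G → [0,∞] a Baire measurable function which is non-meagre, meaning for every r > 0 the set {x : φ(x) < r} is non-meagre. Then the upper semi-continuous regularization of φ ⋄ φ^{⋄-1} vanishes at the identity: limsup_{y→1} (φ ⋄ φ^{⋄-1})(y) = 0, where φ^{⋄-1}(x) = φ(x⁻¹) and (α ⋄ β)(x) = inf_h α(h) + β(h⁻¹x). -/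
open scoped ENNReal
open Filter

/-- Infimal convolution of graded subsets of a group. -/
noncomputable def gconv {G : Type*} [Group G] (α β : G → ℝ≥0∞) : G → ℝ≥0∞ :=
  fun x => ⨅ h : G, α h + β (h⁻¹ * x)

/-- Pettis-type lemma: if `s` is a non-meagre Baire measurable subset of a Polish
group, then for all `y` near `1` we can write `y`-translated intersection: there is
`z ∈ s` with `y⁻¹ * z ∈ s`. -/
theorem pettis_aux {G : Type*} [Group G] [TopologicalSpace G]
    [IsTopologicalGroup G] [PolishSpace G] {s : Set G}
    (hbm : BaireMeasurableSet s) (hnm : ¬ IsMeagre s) :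
    ∀ᶠ y in nhds (1 : G), ∃ z, z ∈ s ∧ y⁻¹ * z ∈ s := by
  letI := TopologicalSpace.upgradeIsCompletelyMetrizable G
  obtain ⟨u, uo, hsu⟩ := hbm.residualEq_isOpen
  have h1 : ∀ᶠ z : G in residual G, z ∈ s ↔ z ∈ u := by
    rw [← Filter.eventuallyEq_set]; exact hsu
  have hune : u.Nonempty := by
    rcases u.eq_empty_or_nonempty with h | h
    · exfalso
      apply hnm
      rw [IsMeagre, ← Filter.eventually_mem_set]
      filter_upwards [h1] with z hz
      intro hzs
      have := hz.mp hzs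
      simp [h] at this
    · exact h
  obtain ⟨x, hx⟩ := hune
  have hcont : Continuous fun y : G => y⁻¹ * x := (continuous_inv).mul continuous_const
  have hV : {y : G | y⁻¹ * x ∈ u} ∈ nhds (1 : G) := by
    have := (uo.preimage hcont).mem_nhds (by simpa using hx : (1 : G) ∈ _)
    exact this
  filter_upwards [hV] with y hy
  by_contra hcon
  push_neg at hcon
  have hmul : Continuous fun z : G => y⁻¹ * z := continuous_const.mul continuous_id
  have ht : Tendsto (fun z : G => y⁻¹ * z) (residual G) (residual G) :=
    tendsto_residual_of_isOpenMap hmul (Homeomorph.mulLeft y⁻¹).isOpenMap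
  have h2 : ∀ᶠ z : G in residual G, y⁻¹ * z ∈ s ↔ y⁻¹ * z ∈ u := ht.eventually h1
  have hres : {z : G | ¬ (z ∈ u ∧ y⁻¹ * z ∈ u)} ∈ residual G := by
    filter_upwards [h1, h2] with z hz1 hz2
    rintro ⟨ha, hb⟩
    exact hcon z (hz1.mpr ha) (hz2.mpr hb)
  have hd : Dense {z : G | ¬ (z ∈ u ∧ y⁻¹ * z ∈ u)} := dense_of_mem_residual hres
  have hW : IsOpen (u ∩ (fun z : G => y⁻¹ * z) ⁻¹' u) := uo.inter (uo.preimage hmul)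
  obtain ⟨w, hw1, hw2⟩ := hd.inter_open_nonempty _ hW ⟨x, hx, hy⟩
  exact hw2 ⟨hw1.1, hw1.2⟩

/-- If `φ` is a non-meagre Baire measurable graded subset of a Polish group `G`
(every strict sublevel set `{φ < r}`, `r > 0`, is non-meagre), then the
u.s.c. envelope of `φ ⋄ φ^{⋄-1}` vanishes at the identity:
`limsup_{y → 1} (φ ⋄ φ^{⋄-1})(y) = 0`. -/
theorem nonmeagre_conv_interior_one {G : Type*} [Group G] [TopologicalSpace G]
    [IsTopologicalGroup G] [PolishSpace G] (φ : G → ℝ≥0∞)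
    (hφ : BaireMeasurableFun φ)
    (hnm : ∀ r : ℝ≥0∞, 0 < r → ¬ IsMeagre {x : G | φ x < r}) :
    limsup (gconv φ (fun x => φ x⁻¹)) (nhds (1 : G)) = 0 := by
  have key : ∀ r : ℝ≥0∞, 0 < r →
      limsup (gconv φ (fun x => φ x⁻¹)) (nhds (1 : G)) ≤ r + r := by
    intro r hr
    have hbm : BaireMeasurableSet {x : G | φ x < r} := hφ _ measurableSet_Iio
    have hev := pettis_aux hbm (hnm r hr)
    refine limsup_le_of_le (by isBoundedDefault) ?_
    filter_upwards [hev] with y hy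
    obtain ⟨z, hz1, hz2⟩ := hy
    calc gconv φ (fun x => φ x⁻¹) y ≤ φ z + φ ((z⁻¹ * y)⁻¹) := iInf_le _ z
      _ = φ z + φ (y⁻¹ * z) := by rw [mul_inv_rev, inv_inv]
      _ ≤ r + r := add_le_add hz1.le hz2.le
  refine le_antisymm ?_ zero_le
  refine ENNReal.le_of_forall_pos_le_add fun ε hε _ => ?_
  have h2 : (ε : ℝ≥0∞) / 2 + ε / 2 = ε := ENNReal.add_halves _
  calc limsup (gconv φ (fun x => φ x⁻¹)) (nhds (1 : G))
      ≤ (ε : ℝ≥0∞) / 2 + ε / 2 := key _ (ENNReal.div_pos (by exact_mod_cast hε.ne') ENNReal.ofNat_ne_top)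
    _ = 0 + ε := by rw [h2, zero_add]
end

section
/- Let G be a Polish group and H : G → [0,∞] a Baire measurable semi-norm such that for every ε > 0 the set {g : H(g) < ε} is non-meagre. Then H is continuous. -/
open scoped ENNReal
open Filter Topology Set

def IsGradedSubgroup {G : Type*} [Group G] (H : G → ℝ≥0∞) : Prop :=
  H 1 = 0 ∧ (∀ g : G, H g⁻¹ = H g) ∧ ∀ g h : G, H (g * h) ≤ H g + H h

/-- Pettis' theorem: if `A` is Baire measurable and non-meagre in a topological group
which is a Baire space, then `A * A⁻¹` is a neighborhood of `1`. -/
lemma pettis_aux_s12 {G : Type*} [Group G] [TopologicalSpace G] [IsTopologicalGroup G]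
    [BaireSpace G] {A : Set G} (hA : BaireMeasurableSet A) (hnm : ¬ IsMeagre A) :
    {g : G | ∃ a ∈ A, ∃ b ∈ A, g = a * b⁻¹} ∈ 𝓝 (1 : G) := by
  obtain ⟨U, Uo, hAU⟩ := hA.residualEq_isOpen
  have hUne : U.Nonempty := by
    rcases U.eq_empty_or_nonempty with h | h
    · exfalso
      apply hnm
      subst h
      refine mem_of_superset hAU ?_
      intro z hz
      simp only [Set.mem_compl_iff]
      intro hzA
      have : (z ∈ A) = (z ∈ (∅ : Set G)) := hz
      rw [this] at hzA
      exact hzA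
    · exact h
  obtain ⟨x, hx⟩ := hUne
  have hV : (fun h : G => h * x) ⁻¹' U ∈ 𝓝 (1 : G) :=
    (Uo.preimage (continuous_mul_right x)).mem_nhds (by simpa using hx)
  filter_upwards [hV] with g hg
  -- hg : g * x ∈ U
  have htrans : (fun y : G => g⁻¹ * y) ⁻¹' {z | (z ∈ A) = (z ∈ U)} ∈ residual G :=
    tendsto_residual_of_isOpenMap (continuous_mul_left g⁻¹)
      (Homeomorph.mulLeft g⁻¹).isOpenMap hAU
  set W : Set G := U ∩ (fun y : G => g⁻¹ * y) ⁻¹' U with hW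
  set R : Set G := {z | (z ∈ A) = (z ∈ U)} ∩ (fun y : G => g⁻¹ * y) ⁻¹' {z | (z ∈ A) = (z ∈ U)}
    with hR
  have hRres : R ∈ residual G := inter_mem hAU htrans
  have hWo : IsOpen W := Uo.inter (Uo.preimage (continuous_mul_left g⁻¹))
  have hWne : W.Nonempty := ⟨g * x, hg, by simpa using hx⟩
  have hmain : (W ∩ R).Nonempty := by
    by_contra hemp
    have hWm : IsMeagre W := by
      refine mem_of_superset hRres ?_
      intro z hz hzW
      exact hemp ⟨z, hzW, hz⟩
    have hd : Dense Wᶜ := dense_of_mem_residual hWm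
    obtain ⟨z, hz1, hz2⟩ := hd.inter_open_nonempty W hWo hWne
    exact hz2 hz1
  obtain ⟨y, ⟨hyU, hygU⟩, hyA, hygA⟩ := hmain
  have hyA' : y ∈ A := by rw [show (y ∈ A) = (y ∈ U) from hyA]; exact hyU
  have hygA' : g⁻¹ * y ∈ A := by
    rw [show (g⁻¹ * y ∈ A) = (g⁻¹ * y ∈ U) from hygA]; exact hygU
  exact ⟨y, hyA', g⁻¹ * y, hygA', by group⟩

/-- A non-meagre Baire measurable semi-norm on a Polish group is continuous. -/
theorem nonmeagre_baireMeasurable_seminorm_continuous {G : Type*} [Group G]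
    [TopologicalSpace G] [IsTopologicalGroup G] [PolishSpace G] (H : G → ℝ≥0∞)
    (hH : IsGradedSubgroup H) (hBM : BaireMeasurableFun H)
    (hnm : ∀ ε : ℝ≥0∞, 0 < ε → ¬ IsMeagre {g : G | H g < ε}) :
    Continuous H := by
  haveI : BaireSpace G := by
    letI := TopologicalSpace.upgradeIsCompletelyMetrizable G
    exact inferInstance
  have key : ∀ ε : ℝ≥0∞, 0 < ε → {g : G | H g < ε} ∈ 𝓝 (1 : G) := by
    intro ε hε
    set δ : ℝ≥0∞ := min ε 1 / 2 with hδ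
    have hδpos : 0 < δ :=
      ENNReal.div_pos (ne_of_gt (lt_min hε zero_lt_one)) (by norm_num)
    have hδδ : δ + δ ≤ ε := by
      rw [hδ, ENNReal.add_halves]
      exact min_le_left _ _
    have hABM : BaireMeasurableSet {g : G | H g < δ} := by
      have := hBM (Set.Iio δ) measurableSet_Iio
      exact this
    have hAnm : ¬ IsMeagre {g : G | H g < δ} := hnm δ hδpos
    refine mem_of_superset (pettis_aux_s12 hABM hAnm) ?_
    rintro g ⟨a, ha, b, hb, rfl⟩
    calc H (a * b⁻¹) ≤ H a + H b⁻¹ := hH.2.2 a b⁻¹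
      _ = H a + H b := by rw [hH.2.1]
      _ < δ + δ := ENNReal.add_lt_add ha hb
      _ ≤ ε := hδδ
  rw [continuous_iff_continuousAt]
  intro g₀
  have hevent : ∀ ε : ℝ≥0∞, 0 < ε → ∀ᶠ g in 𝓝 g₀, H (g * g₀⁻¹) < ε := by
    intro ε hε
    have ht : Tendsto (fun g : G => g * g₀⁻¹) (𝓝 g₀) (𝓝 1) := by
      have := (continuous_mul_right g₀⁻¹).tendsto g₀
      simpa using this
    exact ht (key ε hε)
  have hinv : ∀ g : G, H (g₀ * g⁻¹) = H (g * g₀⁻¹) := by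
    intro g
    rw [show g₀ * g⁻¹ = (g * g₀⁻¹)⁻¹ by group, hH.2.1]
  unfold ContinuousAt
  by_cases htop : H g₀ = ⊤
  · rw [htop]
    have hev : ∀ᶠ g in 𝓝 g₀, H g = ⊤ := by
      filter_upwards [hevent 1 zero_lt_one] with g hg
      by_contra hne
      have h1 : H g₀ ≤ H (g₀ * g⁻¹) + H g := by
        have := hH.2.2 (g₀ * g⁻¹) g
        simpa [mul_assoc] using this
      have h2 : H (g₀ * g⁻¹) ≠ ⊤ := by
        rw [hinv g]; exact (lt_of_lt_of_le hg le_top).ne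
      rw [htop, top_le_iff] at h1
      exact (ENNReal.add_ne_top.mpr ⟨h2, hne⟩) h1
    exact Tendsto.congr' (hev.mono fun g hg => hg.symm) tendsto_const_nhds
  · rw [ENNReal.tendsto_nhds htop]
    intro ε hε
    filter_upwards [hevent ε hε] with g hg
    simp only [Set.mem_Icc]
    constructor
    · refine tsub_le_iff_right.mpr ?_
      calc H g₀ ≤ H (g₀ * g⁻¹) + H g := by
            have := hH.2.2 (g₀ * g⁻¹) g
            simpa [mul_assoc] using this
        _ ≤ ε + H g := add_le_add_left (by rw [hinv g]; exact hg.le) _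
        _ = H g + ε := add_comm _ _
    · calc H g ≤ H (g * g₀⁻¹) + H g₀ := by
            have := hH.2.2 (g * g₀⁻¹) g₀
            simpa [mul_assoc] using this
        _ ≤ ε + H g₀ := add_le_add_left hg.le _
        _ = H g₀ + ε := add_comm _ _
end
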